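/- Let C be a strict monoidal category and let φ be a monoidal structure on the tensor product functor ⊗ : C × C → C, i.e. a natural isomorphism with components φ_{(X₁,Y₁),(X₂,Y₂)} : X₁⊗Y₁⊗X₂⊗Y₂ → X₁⊗X₂⊗Y₁⊗Y₂ satisfying the associativity constraint φ_{(X₁⊗X₂,Y₁⊗Y₂),(X₃,Y₃)} ∘ (φ_{(X₁,Y₁),(X₂,Y₂)} ⊗ id) = φ_{(X₁,Y₁),(X₂⊗X₃,Y₂⊗Y₃)} ∘ (id ⊗ φ_{(X₂,Y₂),(X₃,Y₃)}) and the normalization φ_{(1,1),(X,Y)} = φ_{(X,Y),(1,1)} = id. Define B(φ)_{X,Y} : X⊗Y → Y⊗X as the composite φ⁻¹_{(Y,1),(1,X)} ∘ φ_{(1,X),(Y,1)}. Then B(φ) is a braiding on C: it is a natural isomorphism satisfying both hexagon identities B(φ)_{X⊗Y,Z} = (B(φ)_{X,Z} ⊗ id_Y) ∘ (id_X ⊗ B(φ)_{Y,Z}) and B(φ)_{X,Y⊗Z} = (id_Y ⊗ B(φ)_{X,Z}) ∘ (B(φ)_{X,Y} ⊗ id_Z). -/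

import Mathlib

open CategoryTheory MonoidalCategory

namespace JSaux
variable {C : Type*} [Category C] [MonoidalCategory C]

theorem tensor_eqToHom_eqToHom {X X' Y Y' : C} (h : X = X') (h' : Y = Y') :
    (eqToHom h ⊗ₘ eqToHom h') = eqToHom (by rw [h, h']) := by
  subst h h'; simp

theorem id_tensor_eqToHom (X : C) {Y Y' : C} (h' : Y = Y') :
    (𝟙 X ⊗ₘ eqToHom h') = eqToHom (by rw [h']) := by
  subst h'; simp

theorem eqToHom_tensor_id {X X' : C} (h : X = X') (Y : C) :
    (eqToHom h ⊗ₘ 𝟙 Y) = eqToHom (by rw [h]) := by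
  subst h; simp

theorem tensor_id_eq {A B : C} (f : A ⟶ B) {Z Z' : C} (h : Z = Z') :
    f ⊗ₘ 𝟙 Z' = eqToHom (by rw [h]) ≫ (f ⊗ₘ 𝟙 Z) ≫ eqToHom (by rw [h]) := by
  subst h; simp

theorem id_tensor_eq {X X' : C} (h : X = X') {A B : C} (f : A ⟶ B) :
    𝟙 X' ⊗ₘ f = eqToHom (by rw [h]) ≫ (𝟙 X ⊗ₘ f) ≫ eqToHom (by rw [h]) := by
  subst h; simp

theorem conj_tensor_conj {A B A' B' P Q R S : C} (f : A ⟶ B) (g : A' ⟶ B')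
    (h1 : P = A) (h2 : B = Q) (h3 : R = A') (h4 : B' = S) :
    ((eqToHom h1 ≫ f ≫ eqToHom h2) ⊗ₘ (eqToHom h3 ≫ g ≫ eqToHom h4))
      = eqToHom (by rw [h1, h3]) ≫ (f ⊗ₘ g) ≫ eqToHom (by rw [h2, h4]) := by
  subst h1 h2 h3 h4; simp

theorem inv_eq_of_hom_eq {A B : C} (I : A ≅ B) (h : A = B) (hh : I.hom = eqToHom h) :
    I.inv = eqToHom h.symm := by
  have : I = eqToIso h := Iso.ext (by rw [hh, eqToIso.hom])
  rw [this, eqToIso.inv]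

theorem inv_nat {A B A' B' : C} (I : A ≅ B) (J : A' ≅ B') {f : A ⟶ A'} {g : B ⟶ B'}
    (h : f ≫ J.hom = I.hom ≫ g) : I.inv ≫ f = g ≫ J.inv := by
  rw [Iso.inv_comp_eq, ← Category.assoc, ← h, Category.assoc, Iso.hom_inv_id,
    Category.comp_id]

theorem unit_tensor (hul : ∀ X : C, 𝟙_ C ⊗ X = X)
    (hlu : ∀ X : C, (λ_ X).hom = eqToHom (hul X)) {A B : C} (f : A ⟶ B) :
    𝟙 (𝟙_ C) ⊗ₘ f = eqToHom (hul A) ≫ f ≫ eqToHom (hul B).symm := by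
  have h := MonoidalCategory.leftUnitor_naturality f
  have hi := inv_eq_of_hom_eq (λ_ B) (hul B) (hlu B)
  rw [← Iso.eq_comp_inv] at h
  rw [MonoidalCategory.id_tensorHom, h, hlu, hi, Category.assoc]

theorem tensor_unit (hur : ∀ X : C, X ⊗ 𝟙_ C = X)
    (hru : ∀ X : C, (ρ_ X).hom = eqToHom (hur X)) {A B : C} (f : A ⟶ B) :
    f ⊗ₘ 𝟙 (𝟙_ C) = eqToHom (hur A) ≫ f ≫ eqToHom (hur B).symm := by
  have h := MonoidalCategory.rightUnitor_naturality f
  have hi := inv_eq_of_hom_eq (ρ_ B) (hur B) (hru B)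
  rw [← Iso.eq_comp_inv] at h
  rw [MonoidalCategory.tensorHom_id, h, hru, hi, Category.assoc]

variable (φ : ∀ X₁ Y₁ X₂ Y₂ : C, (X₁ ⊗ Y₁) ⊗ (X₂ ⊗ Y₂) ≅ (X₁ ⊗ X₂) ⊗ (Y₁ ⊗ Y₂))

theorem phi_congr {A B D E A' B' D' E' : C} (hA : A = A') (hB : B = B')
    (hD : D = D') (hE : E = E') :
    (φ A B D E).hom = eqToHom (by rw [hA, hB, hD, hE])
      ≫ (φ A' B' D' E').hom ≫ eqToHom (by rw [hA, hB, hD, hE]) := by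
  subst hA hB hD hE; simp

section

/-- conjugated `φ (1,X) (Y,1)` : the braiding candidate numerator. -/
def cI (hul : ∀ X : C, 𝟙_ C ⊗ X = X) (hur : ∀ X : C, X ⊗ 𝟙_ C = X) (X Y : C) :
    X ⊗ Y ≅ Y ⊗ X :=
  eqToIso (by simp only [hul, hur]) ≪≫ φ (𝟙_ C) X Y (𝟙_ C) ≪≫ eqToIso (by simp only [hul, hur])

/-- conjugated `φ (X,1) (1,Y)`. -/
def dI (hul : ∀ X : C, 𝟙_ C ⊗ X = X) (hur : ∀ X : C, X ⊗ 𝟙_ C = X) (X Y : C) :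
    X ⊗ Y ≅ X ⊗ Y :=
  eqToIso (by simp only [hul, hur]) ≪≫ φ X (𝟙_ C) (𝟙_ C) Y ≪≫ eqToIso (by simp only [hul, hur])

/-- conjugated `φ (X,1) (Y,1)`. -/
def uI (hul : ∀ X : C, 𝟙_ C ⊗ X = X) (hur : ∀ X : C, X ⊗ 𝟙_ C = X) (X Y : C) :
    X ⊗ Y ≅ X ⊗ Y :=
  eqToIso (by simp only [hul, hur]) ≪≫ φ X (𝟙_ C) Y (𝟙_ C) ≪≫ eqToIso (by simp only [hul, hur])

/-- conjugated `φ (1,X) (1,Y)`. -/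
def vI (hul : ∀ X : C, 𝟙_ C ⊗ X = X) (hur : ∀ X : C, X ⊗ 𝟙_ C = X) (X Y : C) :
    X ⊗ Y ≅ X ⊗ Y :=
  eqToIso (by simp only [hul, hur]) ≪≫ φ (𝟙_ C) X (𝟙_ C) Y ≪≫ eqToIso (by simp only [hul, hur])

/-- conjugated `φ (Y,X) (Z,1)`. -/
def rI (hul : ∀ X : C, 𝟙_ C ⊗ X = X) (hur : ∀ X : C, X ⊗ 𝟙_ C = X) (Y X Z : C) :
    (Y ⊗ X) ⊗ Z ≅ (Y ⊗ Z) ⊗ X :=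
  eqToIso (by simp only [hul, hur]) ≪≫ φ Y X Z (𝟙_ C) ≪≫ eqToIso (by simp only [hul, hur])

/-- conjugated `φ (Y,1) (Z,X)`. -/
def sI (hul : ∀ X : C, 𝟙_ C ⊗ X = X) (hur : ∀ X : C, X ⊗ 𝟙_ C = X) (Y Z X : C) :
    Y ⊗ (Z ⊗ X) ≅ (Y ⊗ Z) ⊗ X :=
  eqToIso (by simp only [hul, hur]) ≪≫ φ Y (𝟙_ C) Z X ≪≫ eqToIso (by simp only [hul, hur])

/-- conjugated `φ (1,X) (Z,Y)`. -/
def pI (hul : ∀ X : C, 𝟙_ C ⊗ X = X) (hur : ∀ X : C, X ⊗ 𝟙_ C = X) (X Z Y : C) :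
    X ⊗ (Z ⊗ Y) ≅ Z ⊗ (X ⊗ Y) :=
  eqToIso (by simp only [hul, hur]) ≪≫ φ (𝟙_ C) X Z Y ≪≫ eqToIso (by simp only [hul, hur])

/-- conjugated `φ (Z,X) (1,Y)`. -/
def qI (hul : ∀ X : C, 𝟙_ C ⊗ X = X) (hur : ∀ X : C, X ⊗ 𝟙_ C = X) (Z X Y : C) :
    (Z ⊗ X) ⊗ Y ≅ Z ⊗ (X ⊗ Y) :=
  eqToIso (by simp only [hul, hur]) ≪≫ φ Z X (𝟙_ C) Y ≪≫ eqToIso (by simp only [hul, hur])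

variable (hassoc : ∀ X Y Z : C, (X ⊗ Y) ⊗ Z = X ⊗ (Y ⊗ Z))
variable
  (hcoc : ∀ X₁ Y₁ X₂ Y₂ X₃ Y₃ : C,
      ((φ X₁ Y₁ X₂ Y₂).hom ⊗ₘ 𝟙 (X₃ ⊗ Y₃)) ≫ (φ (X₁ ⊗ X₂) (Y₁ ⊗ Y₂) X₃ Y₃).hom
        = eqToHom (hassoc (X₁ ⊗ Y₁) (X₂ ⊗ Y₂) (X₃ ⊗ Y₃))
          ≫ (𝟙 (X₁ ⊗ Y₁) ⊗ₘ (φ X₂ Y₂ X₃ Y₃).hom)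
          ≫ (φ X₁ Y₁ (X₂ ⊗ X₃) (Y₂ ⊗ Y₃)).hom
          ≫ eqToHom (by simp only [hassoc]))
variable
  (hnat : ∀ {X₁ Y₁ X₂ Y₂ X₁' Y₁' X₂' Y₂' : C}
      (f₁ : X₁ ⟶ X₁') (g₁ : Y₁ ⟶ Y₁') (f₂ : X₂ ⟶ X₂') (g₂ : Y₂ ⟶ Y₂'),
      ((f₁ ⊗ₘ g₁) ⊗ₘ (f₂ ⊗ₘ g₂)) ≫ (φ X₁' Y₁' X₂' Y₂').hom
        = (φ X₁ Y₁ X₂ Y₂).hom ≫ ((f₁ ⊗ₘ f₂) ⊗ₘ (g₁ ⊗ₘ g₂)))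

-- L_C : cocycle instance (Z,1;1,X;1,Y)
include hcoc in
set_option maxHeartbeats 1000000 in
theorem LC (X Y Z : C) :
    ((dI φ hul hur Z X).hom ⊗ₘ 𝟙 Y) ≫ (qI φ hul hur Z X Y).hom
      = eqToHom (hassoc Z X Y) ≫ (𝟙 Z ⊗ₘ (vI φ hul hur X Y).hom)
          ≫ (dI φ hul hur Z (X ⊗ Y)).hom := by
  rw [← cancel_epi (eqToHom (show ((Z ⊗ 𝟙_ C) ⊗ (𝟙_ C ⊗ X)) ⊗ (𝟙_ C ⊗ Y) = (Z ⊗ X) ⊗ Y by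
        simp only [hul, hur])),
      ← cancel_mono (eqToHom (show (Z ⊗ (X ⊗ Y)) = ((Z ⊗ 𝟙_ C) ⊗ 𝟙_ C) ⊗ ((𝟙_ C ⊗ X) ⊗ Y) by
        simp only [hul, hur]))]
  simp only [dI, qI, vI, Iso.trans_hom, eqToIso.hom, comp_tensor_id, id_tensor_comp,
    eqToHom_tensor_id, id_tensor_eqToHom, eqToHom_trans, eqToHom_trans_assoc, eqToHom_refl,
    Category.assoc, Category.comp_id, Category.id_comp]
  rw [tensor_id_eq ((φ Z (𝟙_ C) (𝟙_ C) X).hom) (hul Y),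
      id_tensor_eq (hur Z) ((φ (𝟙_ C) X (𝟙_ C) Y).hom),
      phi_congr φ (hur Z).symm (hul X).symm rfl rfl
        (A' := Z ⊗ 𝟙_ C) (B' := 𝟙_ C ⊗ X) (D' := 𝟙_ C) (E' := Y),
      phi_congr φ rfl rfl (hul (𝟙_ C)).symm rfl
        (A' := Z) (B' := 𝟙_ C) (D' := 𝟙_ C ⊗ 𝟙_ C) (E' := X ⊗ Y)]
  simp only [eqToHom_trans, eqToHom_trans_assoc, eqToHom_refl,
    Category.assoc, Category.comp_id, Category.id_comp]
  simpa only [Category.assoc, eqToHom_trans, eqToHom_trans_assoc, eqToHom_refl,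
    Category.comp_id, Category.id_comp] using hcoc Z (𝟙_ C) (𝟙_ C) X (𝟙_ C) Y

-- L_A : cocycle instance (1,X;1,Y;Z,1)
include hcoc in
set_option maxHeartbeats 1000000 in
theorem LA (X Y Z : C) :
    ((vI φ hul hur X Y).hom ⊗ₘ 𝟙 Z) ≫ (cI φ hul hur (X ⊗ Y) Z).hom
      = eqToHom (hassoc X Y Z) ≫ (𝟙 X ⊗ₘ (cI φ hul hur Y Z).hom)
          ≫ (pI φ hul hur X Z Y).hom := by
  rw [← cancel_epi (eqToHom (show ((𝟙_ C ⊗ X) ⊗ (𝟙_ C ⊗ Y)) ⊗ (Z ⊗ 𝟙_ C) = (X ⊗ Y) ⊗ Z by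
        simp only [hul, hur])),
      ← cancel_mono (eqToHom (show Z ⊗ (X ⊗ Y) = ((𝟙_ C ⊗ 𝟙_ C) ⊗ Z) ⊗ ((X ⊗ Y) ⊗ 𝟙_ C) by
        simp only [hul, hur]))]
  simp only [cI, pI, vI, Iso.trans_hom, eqToIso.hom, comp_tensor_id, id_tensor_comp,
    eqToHom_tensor_id, id_tensor_eqToHom, eqToHom_trans, eqToHom_trans_assoc, eqToHom_refl,
    Category.assoc, Category.comp_id, Category.id_comp]
  rw [tensor_id_eq ((φ (𝟙_ C) X (𝟙_ C) Y).hom) (hur Z),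
      id_tensor_eq (hul X) ((φ (𝟙_ C) Y Z (𝟙_ C)).hom),
      phi_congr φ (hul (𝟙_ C)).symm rfl rfl rfl
        (A' := 𝟙_ C ⊗ 𝟙_ C) (B' := X ⊗ Y) (D' := Z) (E' := 𝟙_ C),
      phi_congr φ rfl rfl (hul Z).symm (hur Y).symm
        (A' := 𝟙_ C) (B' := X) (D' := 𝟙_ C ⊗ Z) (E' := Y ⊗ 𝟙_ C)]
  simp only [eqToHom_trans, eqToHom_trans_assoc, eqToHom_refl,
    Category.assoc, Category.comp_id, Category.id_comp]
  simpa only [Category.assoc, eqToHom_trans, eqToHom_trans_assoc, eqToHom_refl,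
    Category.comp_id, Category.id_comp] using hcoc (𝟙_ C) X (𝟙_ C) Y Z (𝟙_ C)

-- L_B : cocycle instance (1,X;Z,1;1,Y)
include hcoc in
set_option maxHeartbeats 1000000 in
theorem LB (X Y Z : C) :
    ((cI φ hul hur X Z).hom ⊗ₘ 𝟙 Y) ≫ (qI φ hul hur Z X Y).hom
      = eqToHom (hassoc X Z Y) ≫ (𝟙 X ⊗ₘ (dI φ hul hur Z Y).hom)
          ≫ (pI φ hul hur X Z Y).hom := by
  rw [← cancel_epi (eqToHom (show ((𝟙_ C ⊗ X) ⊗ (Z ⊗ 𝟙_ C)) ⊗ (𝟙_ C ⊗ Y) = (X ⊗ Z) ⊗ Y by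
        simp only [hul, hur])),
      ← cancel_mono (eqToHom (show Z ⊗ (X ⊗ Y) = ((𝟙_ C ⊗ Z) ⊗ 𝟙_ C) ⊗ ((X ⊗ 𝟙_ C) ⊗ Y) by
        simp only [hul, hur]))]
  simp only [cI, pI, dI, qI, Iso.trans_hom, eqToIso.hom, comp_tensor_id, id_tensor_comp,
    eqToHom_tensor_id, id_tensor_eqToHom, eqToHom_trans, eqToHom_trans_assoc, eqToHom_refl,
    Category.assoc, Category.comp_id, Category.id_comp]
  rw [tensor_id_eq ((φ (𝟙_ C) X Z (𝟙_ C)).hom) (hul Y),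
      id_tensor_eq (hul X) ((φ Z (𝟙_ C) (𝟙_ C) Y).hom),
      phi_congr φ (hul Z).symm (hur X).symm rfl rfl
        (A' := 𝟙_ C ⊗ Z) (B' := X ⊗ 𝟙_ C) (D' := 𝟙_ C) (E' := Y),
      phi_congr φ rfl rfl (hur Z).symm (hul Y).symm
        (A' := 𝟙_ C) (B' := X) (D' := Z ⊗ 𝟙_ C) (E' := 𝟙_ C ⊗ Y)]
  simp only [eqToHom_trans, eqToHom_trans_assoc, eqToHom_refl,
    Category.assoc, Category.comp_id, Category.id_comp]
  simpa only [Category.assoc, eqToHom_trans, eqToHom_trans_assoc, eqToHom_refl,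
    Category.comp_id, Category.id_comp] using hcoc (𝟙_ C) X Z (𝟙_ C) (𝟙_ C) Y

-- L_A' : cocycle instance (1,X;Y,1;Z,1)
include hcoc in
set_option maxHeartbeats 1000000 in
theorem LA' (X Y Z : C) :
    ((cI φ hul hur X Y).hom ⊗ₘ 𝟙 Z) ≫ (rI φ hul hur Y X Z).hom
      = eqToHom (hassoc X Y Z) ≫ (𝟙 X ⊗ₘ (uI φ hul hur Y Z).hom)
          ≫ (cI φ hul hur X (Y ⊗ Z)).hom := by
  rw [← cancel_epi (eqToHom (show ((𝟙_ C ⊗ X) ⊗ (Y ⊗ 𝟙_ C)) ⊗ (Z ⊗ 𝟙_ C) = (X ⊗ Y) ⊗ Z by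
        simp only [hul, hur])),
      ← cancel_mono (eqToHom (show (Y ⊗ Z) ⊗ X = ((𝟙_ C ⊗ Y) ⊗ Z) ⊗ ((X ⊗ 𝟙_ C) ⊗ 𝟙_ C) by
        simp only [hul, hur]))]
  simp only [cI, rI, uI, Iso.trans_hom, eqToIso.hom, comp_tensor_id, id_tensor_comp,
    eqToHom_tensor_id, id_tensor_eqToHom, eqToHom_trans, eqToHom_trans_assoc, eqToHom_refl,
    Category.assoc, Category.comp_id, Category.id_comp]
  rw [tensor_id_eq ((φ (𝟙_ C) X Y (𝟙_ C)).hom) (hur Z),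
      id_tensor_eq (hul X) ((φ Y (𝟙_ C) Z (𝟙_ C)).hom),
      phi_congr φ (hul Y).symm (hur X).symm rfl rfl
        (A' := 𝟙_ C ⊗ Y) (B' := X ⊗ 𝟙_ C) (D' := Z) (E' := 𝟙_ C),
      phi_congr φ rfl rfl rfl (hul (𝟙_ C)).symm
        (A' := 𝟙_ C) (B' := X) (D' := Y ⊗ Z) (E' := 𝟙_ C ⊗ 𝟙_ C)]
  simp only [eqToHom_trans, eqToHom_trans_assoc, eqToHom_refl,
    Category.assoc, Category.comp_id, Category.id_comp]
  simpa only [Category.assoc, eqToHom_trans, eqToHom_trans_assoc, eqToHom_refl,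
    Category.comp_id, Category.id_comp] using hcoc (𝟙_ C) X Y (𝟙_ C) Z (𝟙_ C)

-- L_B' : cocycle instance (Y,1;1,X;Z,1)
include hcoc in
set_option maxHeartbeats 1000000 in
theorem LB' (X Y Z : C) :
    ((dI φ hul hur Y X).hom ⊗ₘ 𝟙 Z) ≫ (rI φ hul hur Y X Z).hom
      = eqToHom (hassoc Y X Z) ≫ (𝟙 Y ⊗ₘ (cI φ hul hur X Z).hom)
          ≫ (sI φ hul hur Y Z X).hom := by
  rw [← cancel_epi (eqToHom (show ((Y ⊗ 𝟙_ C) ⊗ (𝟙_ C ⊗ X)) ⊗ (Z ⊗ 𝟙_ C) = (Y ⊗ X) ⊗ Z by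
        simp only [hul, hur])),
      ← cancel_mono (eqToHom (show (Y ⊗ Z) ⊗ X = ((Y ⊗ 𝟙_ C) ⊗ Z) ⊗ ((𝟙_ C ⊗ X) ⊗ 𝟙_ C) by
        simp only [hul, hur]))]
  simp only [dI, rI, cI, sI, Iso.trans_hom, eqToIso.hom, comp_tensor_id, id_tensor_comp,
    eqToHom_tensor_id, id_tensor_eqToHom, eqToHom_trans, eqToHom_trans_assoc, eqToHom_refl,
    Category.assoc, Category.comp_id, Category.id_comp]
  rw [tensor_id_eq ((φ Y (𝟙_ C) (𝟙_ C) X).hom) (hur Z),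
      id_tensor_eq (hur Y) ((φ (𝟙_ C) X Z (𝟙_ C)).hom),
      phi_congr φ (hur Y).symm (hul X).symm rfl rfl
        (A' := Y ⊗ 𝟙_ C) (B' := 𝟙_ C ⊗ X) (D' := Z) (E' := 𝟙_ C),
      phi_congr φ rfl rfl (hul Z).symm (hur X).symm
        (A' := Y) (B' := 𝟙_ C) (D' := 𝟙_ C ⊗ Z) (E' := X ⊗ 𝟙_ C)]
  simp only [eqToHom_trans, eqToHom_trans_assoc, eqToHom_refl,
    Category.assoc, Category.comp_id, Category.id_comp]
  simpa only [Category.assoc, eqToHom_trans, eqToHom_trans_assoc, eqToHom_refl,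
    Category.comp_id, Category.id_comp] using hcoc Y (𝟙_ C) (𝟙_ C) X Z (𝟙_ C)

-- L_C' : cocycle instance (Y,1;Z,1;1,X)
include hcoc in
set_option maxHeartbeats 1000000 in
theorem LC' (X Y Z : C) :
    ((uI φ hul hur Y Z).hom ⊗ₘ 𝟙 X) ≫ (dI φ hul hur (Y ⊗ Z) X).hom
      = eqToHom (hassoc Y Z X) ≫ (𝟙 Y ⊗ₘ (dI φ hul hur Z X).hom)
          ≫ (sI φ hul hur Y Z X).hom := by
  rw [← cancel_epi (eqToHom (show ((Y ⊗ 𝟙_ C) ⊗ (Z ⊗ 𝟙_ C)) ⊗ (𝟙_ C ⊗ X) = (Y ⊗ Z) ⊗ X by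
        simp only [hul, hur])),
      ← cancel_mono (eqToHom (show (Y ⊗ Z) ⊗ X = ((Y ⊗ Z) ⊗ 𝟙_ C) ⊗ ((𝟙_ C ⊗ 𝟙_ C) ⊗ X) by
        simp only [hul, hur]))]
  simp only [uI, dI, sI, Iso.trans_hom, eqToIso.hom, comp_tensor_id, id_tensor_comp,
    eqToHom_tensor_id, id_tensor_eqToHom, eqToHom_trans, eqToHom_trans_assoc, eqToHom_refl,
    Category.assoc, Category.comp_id, Category.id_comp]
  rw [tensor_id_eq ((φ Y (𝟙_ C) Z (𝟙_ C)).hom) (hul X),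
      id_tensor_eq (hur Y) ((φ Z (𝟙_ C) (𝟙_ C) X).hom),
      phi_congr φ rfl (hul (𝟙_ C)).symm rfl rfl
        (A' := Y ⊗ Z) (B' := 𝟙_ C ⊗ 𝟙_ C) (D' := 𝟙_ C) (E' := X),
      phi_congr φ rfl rfl (hur Z).symm (hul X).symm
        (A' := Y) (B' := 𝟙_ C) (D' := Z ⊗ 𝟙_ C) (E' := 𝟙_ C ⊗ X)]
  simp only [eqToHom_trans, eqToHom_trans_assoc, eqToHom_refl,
    Category.assoc, Category.comp_id, Category.id_comp]
  simpa only [Category.assoc, eqToHom_trans, eqToHom_trans_assoc, eqToHom_refl,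
    Category.comp_id, Category.id_comp] using hcoc Y (𝟙_ C) Z (𝟙_ C) (𝟙_ C) X

-- naturality of cI
include hnat in
theorem c_nat (hlu : ∀ X : C, (λ_ X).hom = eqToHom (hul X))
    (hru : ∀ X : C, (ρ_ X).hom = eqToHom (hur X))
    {X Y X' Y' : C} (f : X ⟶ X') (g : Y ⟶ Y') :
    (f ⊗ₘ g) ≫ (cI φ hul hur X' Y').hom = (cI φ hul hur X Y).hom ≫ (g ⊗ₘ f) := by
  have H := hnat (𝟙 (𝟙_ C)) f g (𝟙 (𝟙_ C))
  rw [unit_tensor hul hlu f, tensor_unit hur hru g, unit_tensor hul hlu g,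
    tensor_unit hur hru f] at H
  simp only [conj_tensor_conj] at H
  rw [← cancel_epi (eqToHom (show (𝟙_ C ⊗ X) ⊗ (Y ⊗ 𝟙_ C) = X ⊗ Y by simp only [hul, hur])),
      ← cancel_mono (eqToHom (show Y' ⊗ X' = (𝟙_ C ⊗ Y') ⊗ (X' ⊗ 𝟙_ C) by
        simp only [hul, hur]))]
  simp only [cI, Iso.trans_hom, eqToIso.hom, eqToHom_trans, eqToHom_trans_assoc,
    eqToHom_refl, Category.assoc, Category.comp_id, Category.id_comp]
  simpa only [Category.assoc, eqToHom_trans, eqToHom_trans_assoc, eqToHom_refl,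
    Category.comp_id, Category.id_comp] using H

-- naturality of dI
include hnat in
theorem d_nat (hlu : ∀ X : C, (λ_ X).hom = eqToHom (hul X))
    (hru : ∀ X : C, (ρ_ X).hom = eqToHom (hur X))
    {X Y X' Y' : C} (f : X ⟶ X') (g : Y ⟶ Y') :
    (f ⊗ₘ g) ≫ (dI φ hul hur X' Y').hom = (dI φ hul hur X Y).hom ≫ (f ⊗ₘ g) := by
  have H := hnat f (𝟙 (𝟙_ C)) (𝟙 (𝟙_ C)) g
  rw [unit_tensor hul hlu g, tensor_unit hur hru f] at H
  simp only [conj_tensor_conj] at H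
  rw [← cancel_epi (eqToHom (show (X ⊗ 𝟙_ C) ⊗ (𝟙_ C ⊗ Y) = X ⊗ Y by simp only [hul, hur])),
      ← cancel_mono (eqToHom (show X' ⊗ Y' = (X' ⊗ 𝟙_ C) ⊗ (𝟙_ C ⊗ Y') by
        simp only [hul, hur]))]
  simp only [dI, Iso.trans_hom, eqToIso.hom, eqToHom_trans, eqToHom_trans_assoc,
    eqToHom_refl, Category.assoc, Category.comp_id, Category.id_comp]
  simpa only [Category.assoc, eqToHom_trans, eqToHom_trans_assoc, eqToHom_refl,
    Category.comp_id, Category.id_comp] using H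

end
end JSaux

set_option maxHeartbeats 4000000
open JSaux


/-- Joyal–Street: on a strict monoidal category `C` (strictness being expressed by the
hypotheses that the coherence isomorphisms are identities along equalities of objects),
any (normalized) monoidal structure `φ` on the tensor product functor `⊗ : C × C → C`
gives rise to a braiding `B(φ)_{X,Y} = φ⁻¹_{(Y,1),(1,X)} ∘ φ_{(1,X),(Y,1)}` on `C`:
it is a natural isomorphism satisfying both hexagon identities. -/
theorem stmt_13 {C : Type*} [Category C] [MonoidalCategory C]
    -- strictness of the monoidal category:
    (hassoc : ∀ X Y Z : C, (X ⊗ Y) ⊗ Z = X ⊗ (Y ⊗ Z))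
    (hul : ∀ X : C, 𝟙_ C ⊗ X = X)
    (hur : ∀ X : C, X ⊗ 𝟙_ C = X)
    (hα : ∀ X Y Z : C, (α_ X Y Z).hom = eqToHom (hassoc X Y Z))
    (hlu : ∀ X : C, (λ_ X).hom = eqToHom (hul X))
    (hru : ∀ X : C, (ρ_ X).hom = eqToHom (hur X))
    -- a monoidal structure `φ` on the tensor product functor:
    (φ : ∀ X₁ Y₁ X₂ Y₂ : C, (X₁ ⊗ Y₁) ⊗ (X₂ ⊗ Y₂) ≅ (X₁ ⊗ X₂) ⊗ (Y₁ ⊗ Y₂))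
    (hnat : ∀ {X₁ Y₁ X₂ Y₂ X₁' Y₁' X₂' Y₂' : C}
      (f₁ : X₁ ⟶ X₁') (g₁ : Y₁ ⟶ Y₁') (f₂ : X₂ ⟶ X₂') (g₂ : Y₂ ⟶ Y₂'),
      ((f₁ ⊗ₘ g₁) ⊗ₘ (f₂ ⊗ₘ g₂)) ≫ (φ X₁' Y₁' X₂' Y₂').hom
        = (φ X₁ Y₁ X₂ Y₂).hom ≫ ((f₁ ⊗ₘ f₂) ⊗ₘ (g₁ ⊗ₘ g₂)))
    -- the associativity (cocycle) constraint for `φ`: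
    (hcoc : ∀ X₁ Y₁ X₂ Y₂ X₃ Y₃ : C,
      ((φ X₁ Y₁ X₂ Y₂).hom ⊗ₘ 𝟙 (X₃ ⊗ Y₃)) ≫ (φ (X₁ ⊗ X₂) (Y₁ ⊗ Y₂) X₃ Y₃).hom
        = eqToHom (hassoc (X₁ ⊗ Y₁) (X₂ ⊗ Y₂) (X₃ ⊗ Y₃))
          ≫ (𝟙 (X₁ ⊗ Y₁) ⊗ₘ (φ X₂ Y₂ X₃ Y₃).hom)
          ≫ (φ X₁ Y₁ (X₂ ⊗ X₃) (Y₂ ⊗ Y₃)).hom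
          ≫ eqToHom (by simp only [hassoc]))
    -- the normalization constraint for `φ`:
    (hnorm₁ : ∀ X Y : C, (φ (𝟙_ C) (𝟙_ C) X Y).hom = eqToHom (by simp only [hul]))
    (hnorm₂ : ∀ X Y : C, (φ X Y (𝟙_ C) (𝟙_ C)).hom = eqToHom (by simp only [hul, hur]))
    -- the induced candidate braiding `B(φ)`:
    (B : ∀ X Y : C, X ⊗ Y ⟶ Y ⊗ X)
    (hB : ∀ X Y : C, B X Y
      = eqToHom (show X ⊗ Y = (𝟙_ C ⊗ X) ⊗ (Y ⊗ 𝟙_ C) by simp only [hul, hur])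
        ≫ (φ (𝟙_ C) X Y (𝟙_ C)).hom
        ≫ eqToHom (show (𝟙_ C ⊗ Y) ⊗ (X ⊗ 𝟙_ C) = (Y ⊗ 𝟙_ C) ⊗ (𝟙_ C ⊗ X) by
            simp only [hul, hur])
        ≫ (φ Y (𝟙_ C) (𝟙_ C) X).inv
        ≫ eqToHom (show (Y ⊗ 𝟙_ C) ⊗ (𝟙_ C ⊗ X) = Y ⊗ X by simp only [hul, hur])) :
    -- `B(φ)` is a braiding:
    (∀ X Y : C, IsIso (B X Y))
    ∧ (∀ {X Y X' Y' : C} (f : X ⟶ X') (g : Y ⟶ Y'),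
        (f ⊗ₘ g) ≫ B X' Y' = B X Y ≫ (g ⊗ₘ f))
    ∧ (∀ X Y Z : C, B (X ⊗ Y) Z
        = eqToHom (hassoc X Y Z) ≫ (𝟙 X ⊗ₘ B Y Z) ≫ eqToHom (hassoc X Z Y).symm
          ≫ (B X Z ⊗ₘ 𝟙 Y) ≫ eqToHom (hassoc Z X Y))
    ∧ (∀ X Y Z : C, B X (Y ⊗ Z)
        = eqToHom (hassoc X Y Z).symm ≫ (B X Y ⊗ₘ 𝟙 Z) ≫ eqToHom (hassoc Y X Z)
          ≫ (𝟙 Y ⊗ₘ B X Z) ≫ eqToHom (hassoc Y Z X).symm) := by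
  have hB' : ∀ X Y : C, B X Y = (cI φ hul hur X Y).hom ≫ (dI φ hul hur Y X).inv := by
    intro X Y
    rw [hB]
    simp only [cI, dI, Iso.trans_hom, Iso.trans_inv, eqToIso.hom, eqToIso.inv,
      eqToHom_trans, eqToHom_trans_assoc, eqToHom_refl, Category.assoc,
      Category.comp_id, Category.id_comp]
  have nat : ∀ {X Y X' Y' : C} (f : X ⟶ X') (g : Y ⟶ Y'),
      (f ⊗ₘ g) ≫ B X' Y' = B X Y ≫ (g ⊗ₘ f) := by
    intro X Y X' Y' f g
    rw [hB', hB', ← Category.assoc, c_nat φ hnat hlu hru f g, Category.assoc,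
      Category.assoc]
    congr 1
    exact (inv_nat (dI φ hul hur Y X) (dI φ hul hur Y' X')
      (d_nat φ hnat hlu hru g f)).symm
  refine ⟨?_, @nat, ?_, ?_⟩
  · intro X Y
    rw [hB' X Y]
    infer_instance
  · -- hexagon 1
    intro X Y Z
    have e_c : (cI φ hul hur (X ⊗ Y) Z).hom
        = ((vI φ hul hur X Y).inv ⊗ₘ 𝟙 Z) ≫ eqToHom (hassoc X Y Z)
          ≫ (𝟙 X ⊗ₘ (cI φ hul hur Y Z).hom) ≫ (pI φ hul hur X Z Y).hom := by
      rw [← LA φ hassoc hcoc X Y Z, ← Category.assoc, ← comp_tensor_id,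
        Iso.inv_hom_id, id_tensorHom_id, Category.id_comp]
    have e_p : (pI φ hul hur X Z Y).hom
        = (𝟙 X ⊗ₘ (dI φ hul hur Z Y).inv) ≫ eqToHom (hassoc X Z Y).symm
          ≫ ((cI φ hul hur X Z).hom ⊗ₘ 𝟙 Y) ≫ (qI φ hul hur Z X Y).hom := by
      rw [LB φ hassoc hcoc X Y Z]
      simp only [eqToHom_trans_assoc, eqToHom_refl, Category.id_comp]
      rw [← Category.assoc, ← id_tensor_comp, Iso.inv_hom_id, id_tensorHom_id,
        Category.id_comp]
    have e_q : (qI φ hul hur Z X Y).hom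
        = ((dI φ hul hur Z X).inv ⊗ₘ 𝟙 Y) ≫ eqToHom (hassoc Z X Y)
          ≫ (𝟙 Z ⊗ₘ (vI φ hul hur X Y).hom) ≫ (dI φ hul hur Z (X ⊗ Y)).hom := by
      rw [← LC φ hassoc hcoc X Y Z, ← Category.assoc, ← comp_tensor_id,
        Iso.inv_hom_id, id_tensorHom_id, Category.id_comp]
    have key : B (X ⊗ Y) Z
        = ((vI φ hul hur X Y).inv ⊗ₘ 𝟙 Z)
          ≫ (eqToHom (hassoc X Y Z) ≫ (𝟙 X ⊗ₘ B Y Z) ≫ eqToHom (hassoc X Z Y).symm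
              ≫ (B X Z ⊗ₘ 𝟙 Y) ≫ eqToHom (hassoc Z X Y))
          ≫ (𝟙 Z ⊗ₘ (vI φ hul hur X Y).hom) := by
      rw [hB' (X ⊗ Y) Z, e_c, e_p, e_q, hB' Y Z, hB' X Z]
      simp only [Category.assoc, id_tensor_comp, comp_tensor_id, Iso.hom_inv_id,
        Iso.hom_inv_id_assoc, Category.comp_id]
    have hN := nat ((vI φ hul hur X Y).hom) (𝟙 Z)
    rw [key] at hN
    rw [key]
    rw [← Category.assoc, ← comp_tensor_id, Iso.hom_inv_id, id_tensorHom_id,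
      Category.id_comp] at hN
    rw [← cancel_mono (𝟙 Z ⊗ₘ (vI φ hul hur X Y).hom)]
    exact hN.symm
  · -- hexagon 2
    intro X Y Z
    have e_c : (cI φ hul hur X (Y ⊗ Z)).hom
        = (𝟙 X ⊗ₘ (uI φ hul hur Y Z).inv) ≫ eqToHom (hassoc X Y Z).symm
          ≫ ((cI φ hul hur X Y).hom ⊗ₘ 𝟙 Z) ≫ (rI φ hul hur Y X Z).hom := by
      rw [LA' φ hassoc hcoc X Y Z]
      simp only [eqToHom_trans_assoc, eqToHom_refl, Category.id_comp]
      rw [← Category.assoc, ← id_tensor_comp, Iso.inv_hom_id, id_tensorHom_id,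
        Category.id_comp]
    have e_r : (rI φ hul hur Y X Z).hom
        = ((dI φ hul hur Y X).inv ⊗ₘ 𝟙 Z) ≫ eqToHom (hassoc Y X Z)
          ≫ (𝟙 Y ⊗ₘ (cI φ hul hur X Z).hom) ≫ (sI φ hul hur Y Z X).hom := by
      rw [← LB' φ hassoc hcoc X Y Z, ← Category.assoc, ← comp_tensor_id,
        Iso.inv_hom_id, id_tensorHom_id, Category.id_comp]
    have e_s : (sI φ hul hur Y Z X).hom
        = (𝟙 Y ⊗ₘ (dI φ hul hur Z X).inv) ≫ eqToHom (hassoc Y Z X).symm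
          ≫ ((uI φ hul hur Y Z).hom ⊗ₘ 𝟙 X) ≫ (dI φ hul hur (Y ⊗ Z) X).hom := by
      rw [LC' φ hassoc hcoc X Y Z]
      simp only [eqToHom_trans_assoc, eqToHom_refl, Category.id_comp]
      rw [← Category.assoc, ← id_tensor_comp, Iso.inv_hom_id, id_tensorHom_id,
        Category.id_comp]
    have key : B X (Y ⊗ Z)
        = (𝟙 X ⊗ₘ (uI φ hul hur Y Z).inv)
          ≫ (eqToHom (hassoc X Y Z).symm ≫ (B X Y ⊗ₘ 𝟙 Z) ≫ eqToHom (hassoc Y X Z)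
              ≫ (𝟙 Y ⊗ₘ B X Z) ≫ eqToHom (hassoc Y Z X).symm)
          ≫ ((uI φ hul hur Y Z).hom ⊗ₘ 𝟙 X) := by
      rw [hB' X (Y ⊗ Z), e_c, e_r, e_s, hB' X Y, hB' X Z]
      simp only [Category.assoc, id_tensor_comp, comp_tensor_id, Iso.hom_inv_id,
        Iso.hom_inv_id_assoc, Category.comp_id]
    have hN := nat (𝟙 X) ((uI φ hul hur Y Z).hom)
    rw [key] at hN
    rw [key]
    rw [← Category.assoc, ← id_tensor_comp, Iso.hom_inv_id, id_tensorHom_id,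
      Category.id_comp] at hN
    rw [← cancel_mono ((uI φ hul hur Y Z).hom ⊗ₘ 𝟙 X)]
    exact hN.symm
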